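/- arXiv:1902.02696 — 4 statements merged into one kernel-verified Lean document; each statement's English description precedes it below -/
import Mathlib

section
/- For a marked Petri net 𝒩 = (N, m₀), the set of markings that mark every initially marked trap of 𝒩 (the trap invariant) is an invariant of 𝒩: it contains m₀ and is closed under the firing relation. -/
/-- Edges `E(x,y)` are coded by `Esp : S → T → Bool` (place-to-transition) and
`Eps : T → S → Bool` (transition-to-place). -/
def IsTrap {S T : Type*} (Esp : S → T → Bool) (Eps : T → S → Bool) (W : Set S) : Prop :=
  ∀ t : T, (∃ s ∈ W, Esp s t = true) → ∃ s ∈ W, Eps t s = true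

/-- `t` is enabled in marking `m` iff every place of `pre t` carries a token. -/
def Enabled {S T : Type*} (Esp : S → T → Bool) (m : S → ℕ) (t : T) : Prop :=
  ∀ s : S, Esp s t = true → 0 < m s

/-- The firing relation `m →t m'`. -/
def Fires {S T : Type*} (Esp : S → T → Bool) (Eps : T → S → Bool)
    (m : S → ℕ) (t : T) (m' : S → ℕ) : Prop :=
  Enabled Esp m t ∧
    ∀ s : S, m' s = m s - (if Esp s t then 1 else 0) + (if Eps t s then 1 else 0)

/-- `m` marks `W` iff some place of `W` carries a token. -/
def Marks {S : Type*} (m : S → ℕ) (W : Set S) : Prop := ∃ s ∈ W, 0 < m s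


/-- An initially marked trap (IMT) of the marked Petri net `(N, m₀)`. -/
def IMT {S T : Type*} (Esp : S → T → Bool) (Eps : T → S → Bool)
    (m₀ : S → ℕ) (W : Set S) : Prop :=
  IsTrap Esp Eps W ∧ Marks m₀ W

/-- The trap invariant: markings that mark every initially marked trap. -/
def TrapInv {S T : Type*} (Esp : S → T → Bool) (Eps : T → S → Bool)
    (m₀ : S → ℕ) : Set (S → ℕ) :=
  {m | ∀ W : Set S, IMT Esp Eps m₀ W → Marks m W}

/-- The trap invariant of a marked Petri net is an invariant:
it contains the initial marking and is closed under the firing relation. -/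
theorem stmt2 {S T : Type*} (Esp : S → T → Bool) (Eps : T → S → Bool) (m₀ : S → ℕ) :
    m₀ ∈ TrapInv Esp Eps m₀ ∧
    ∀ (m : S → ℕ) (t : T) (m' : S → ℕ),
      m ∈ TrapInv Esp Eps m₀ → Fires Esp Eps m t m' → m' ∈ TrapInv Esp Eps m₀ := by
  constructor
  · intro W hW; exact hW.2
  · rintro m t m' hm ⟨hen, hfire⟩ W hW
    obtain ⟨s, hsW, hs⟩ := hm W hW
    by_cases h : Esp s t = true
    · obtain ⟨s', hs'W, hs'⟩ := hW.1 t ⟨s, hsW, h⟩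
      refine ⟨s', hs'W, ?_⟩
      rw [hfire s', hs']
      simp
    · refine ⟨s, hsW, ?_⟩
      rw [hfire s]
      simp [h]
      omega
end

section
/- Let A be a nondeterministic finite automaton over alphabet {0,1}^ℓ and let A* be its saturation, obtained by adding, for each transition (s, σ, s') of A, all transitions (s, τ, s') with σ(j) ≤ τ(j) for all 1 ≤ j ≤ ℓ. Then the minimal languages coincide: Lmin(A) = Lmin(A*), where Lmin(B) = {w ∈ L(B) | no word w' with w' ⪯ w and w' ≠ w is in L(B)}, and w₁ ⪯ w₂ iff the words have equal length and w₁ is pointwise componentwise ≤ w₂. -/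
/-- A nondeterministic finite automaton over the alphabet `{0,1}^ℓ`. -/
structure NFA' (Q : Type*) (ℓ : ℕ) where
  I : Set Q
  F : Set Q
  δ : Q → (Fin ℓ → Bool) → Q → Prop

/-- `ρ` is a run of `A` on the word `w` (only the first `w.length + 1` values
of `ρ` matter). -/
def IsRun {Q : Type*} {ℓ : ℕ} (A : NFA' Q ℓ) (w : List (Fin ℓ → Bool)) (ρ : ℕ → Q) : Prop :=
  ρ 0 ∈ A.I ∧ ∀ i (h : i < w.length), A.δ (ρ i) (w.get ⟨i, h⟩) (ρ (i + 1))

/-- Acceptance: some run ends in a final state. -/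
def Accepts {Q : Type*} {ℓ : ℕ} (A : NFA' Q ℓ) (w : List (Fin ℓ → Bool)) : Prop :=
  ∃ ρ : ℕ → Q, IsRun A w ρ ∧ ρ w.length ∈ A.F

/-- Saturation: for each transition `(s, σ, s')`, add all `(s, τ, s')` with
`σ(j) ≤ τ(j)` for every track `j`. -/
def saturate {Q : Type*} {ℓ : ℕ} (A : NFA' Q ℓ) : NFA' Q ℓ where
  I := A.I
  F := A.F
  δ := fun q τ q' => ∃ σ : Fin ℓ → Bool, A.δ q σ q' ∧ ∀ j, σ j ≤ τ j

/-- Pointwise componentwise order on words of equal length. -/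
def wle {ℓ : ℕ} (w₁ w₂ : List (Fin ℓ → Bool)) : Prop :=
  List.Forall₂ (fun a b => ∀ j, a j ≤ b j) w₁ w₂

/-- The minimal language of `B`. -/
def Lmin {Q : Type*} {ℓ : ℕ} (B : NFA' Q ℓ) : Set (List (Fin ℓ → Bool)) :=
  {w | Accepts B w ∧ ∀ w', wle w' w → w' ≠ w → ¬ Accepts B w'}


lemma accepts_saturate {Q : Type*} {ℓ : ℕ} (A : NFA' Q ℓ) (w : List (Fin ℓ → Bool))
    (h : Accepts A w) : Accepts (saturate A) w := by
  obtain ⟨ρ, ⟨h0, hs⟩, hf⟩ := h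
  exact ⟨ρ, ⟨h0, fun i hi => ⟨_, hs i hi, fun j => le_refl _⟩⟩, hf⟩

lemma saturate_extract {Q : Type*} {ℓ : ℕ} (A : NFA' Q ℓ) (w : List (Fin ℓ → Bool))
    (h : Accepts (saturate A) w) : ∃ w', wle w' w ∧ Accepts A w' := by
  obtain ⟨ρ, ⟨h0, hs⟩, hf⟩ := h
  choose σ hσ hle using fun (i : Fin w.length) => hs i i.2
  refine ⟨List.ofFn σ, ?_, ρ, ⟨h0, ?_⟩, ?_⟩
  · rw [wle, List.forall₂_iff_get]
    refine ⟨by simp, fun i h1 h2 => ?_⟩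
    simpa using hle ⟨i, h2⟩
  · intro i hi
    simp only [List.length_ofFn] at hi
    simpa using hσ ⟨i, hi⟩
  · rw [List.length_ofFn]; exact hf

lemma wle_trans {ℓ : ℕ} {a b c : List (Fin ℓ → Bool)} (h1 : wle a b) (h2 : wle b c) :
    wle a c := by
  rw [wle, List.forall₂_iff_get] at *
  obtain ⟨l1, g1⟩ := h1
  obtain ⟨l2, g2⟩ := h2
  refine ⟨l1.trans l2, fun i ha hc j => ?_⟩
  exact le_trans (g1 i ha (l1 ▸ ha) j) (g2 i (l1 ▸ ha) hc j)

lemma wle_antisymm {ℓ : ℕ} {a b : List (Fin ℓ → Bool)} (h1 : wle a b) (h2 : wle b a) :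
    a = b := by
  rw [wle, List.forall₂_iff_get] at *
  obtain ⟨l1, g1⟩ := h1
  obtain ⟨l2, g2⟩ := h2
  refine List.ext_get l1 (fun i ha hb => funext fun j => ?_)
  exact le_antisymm (g1 i ha hb j) (g2 i hb ha j)

/-- Saturation preserves the minimal language: `Lmin(A) = Lmin(A*)`. -/
theorem stmt10 {Q : Type*} {ℓ : ℕ} (A : NFA' Q ℓ) :
    Lmin A = Lmin (saturate A) := by
  ext w
  constructor
  · rintro ⟨hacc, hmin⟩
    refine ⟨accepts_saturate A w hacc, fun w' hle hne hacc' => ?_⟩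
    obtain ⟨w'', hle'', hacc''⟩ := saturate_extract A w' hacc'
    have hww : wle w'' w := wle_trans hle'' hle
    rcases eq_or_ne w'' w with rfl | hne''
    · exact hne (wle_antisymm hle hle'')
    · exact hmin w'' hww hne'' hacc''
  · rintro ⟨hacc, hmin⟩
    obtain ⟨w'', hle'', hacc''⟩ := saturate_extract A w hacc
    have hw : w'' = w := by
      by_contra hne
      exact hmin w'' hle'' hne (accepts_saturate A w'' hacc'')
    subst hw
    exact ⟨hacc'', fun w' hle hne ha => hmin w' hle hne (accepts_saturate A w' ha)⟩
end

section
/- Booleanization commutes with dualization: for any WS1S formula φ in negation normal form and any n > 0, the propositional formulas B_n(dual(φ)) and dual(B_n(φ)) are logically equivalent, where dual on WS1S is as defined (swapping ∧/∨, ∃/∀, negating set-variable literals, leaving predicate literals unchanged) and dual on propositional formulas swaps ∧ and ∨ leaving literals unchanged. -/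
inductive WTerm
  | zero
  | fvar (x : ℕ)
  | succ (t : WTerm)

/-- Ground index of a term under a ground environment `e`. -/
def WTerm.gidx (e : ℕ → ℕ) : WTerm → ℕ
  | .zero => 0
  | .fvar x => e x
  | .succ t => t.gidx e + 1

/-- WS1S formulas in negation normal form. -/
inductive WForm
  | eq (t₁ t₂ : WTerm)
  | ne (t₁ t₂ : WTerm)
  | pr (p : ℕ) (t : WTerm)
  | npr (p : ℕ) (t : WTerm)
  | sv (X : ℕ) (t : WTerm)
  | nsv (X : ℕ) (t : WTerm)
  | and (a b : WForm)
  | or (a b : WForm)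
  | exF (x : ℕ) (a : WForm)
  | allF (x : ℕ) (a : WForm)
  | exS (X : ℕ) (a : WForm)
  | allS (X : ℕ) (a : WForm)

/-- WS1S dualization: swap `∧`/`∨` and `∃`/`∀`, negate equality and
set-variable literals, leave predicate literals unchanged. -/
def WForm.dual : WForm → WForm
  | .eq t₁ t₂ => .ne t₁ t₂
  | .ne t₁ t₂ => .eq t₁ t₂
  | .pr p t => .pr p t
  | .npr p t => .npr p t
  | .sv X t => .nsv X t
  | .nsv X t => .sv X t
  | .and a b => .or a.dual b.dual
  | .or a b => .and a.dual b.dual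
  | .exF x a => .allF x a.dual
  | .allF x a => .exF x a.dual
  | .exS X a => .allS X a.dual
  | .allS X a => .exS X a.dual

/-- Propositional formulas over variables `(predicate symbol, position)`. -/
inductive PF
  | const (b : Bool)
  | pvar (v : ℕ × ℕ)
  | and (f g : PF)
  | or (f g : PF)
  | not (f : PF)

def PF.Sat (β : ℕ × ℕ → Prop) : PF → Prop
  | .const b => b = true
  | .pvar v => β v
  | .and f g => f.Sat β ∧ g.Sat β
  | .or f g => f.Sat β ∨ g.Sat β
  | .not f => ¬ f.Sat β

/-- Propositional dualization: swap `∧`/`∨`, leave literals unchanged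
(constants are complemented). -/
def PF.dual : PF → PF
  | .const b => .const (!b)
  | .pvar v => .pvar v
  | .and f g => .or f.dual g.dual
  | .or f g => .and f.dual g.dual
  | .not f => .not f.dual

def bigOr (l : List PF) : PF := l.foldr PF.or (PF.const false)
def bigAnd (l : List PF) : PF := l.foldr PF.and (PF.const true)

/-- Truth value of the ground equality `s^i(0̄) = s^j(0̄)` over `[n]`. -/
def eqB (n i j : ℕ) : Bool := decide (i = j ∨ (n - 1 ≤ i ∧ n - 1 ≤ j))

/-- Booleanization `B_n` for NNF WS1S formulas (universal quantifiers unfold to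
finite conjunctions). -/
def boolize (n : ℕ) : WForm → (ℕ → ℕ) → (ℕ → List ℕ) → PF
  | .eq t₁ t₂, e, _ => .const (eqB n (t₁.gidx e) (t₂.gidx e))
  | .ne t₁ t₂, e, _ => .const (!eqB n (t₁.gidx e) (t₂.gidx e))
  | .pr p t, e, _ => .pvar (p, min (t.gidx e) (n - 1))
  | .npr p t, e, _ => .not (.pvar (p, min (t.gidx e) (n - 1)))
  | .sv X t, e, E => .const ((E X).any (fun i => eqB n (t.gidx e) i))
  | .nsv X t, e, E => .const (!(E X).any (fun i => eqB n (t.gidx e) i))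
  | .and a b, e, E => .and (boolize n a e E) (boolize n b e E)
  | .or a b, e, E => .or (boolize n a e E) (boolize n b e E)
  | .exF x a, e, E =>
      bigOr ((List.range n).map (fun i => boolize n a (Function.update e x i) E))
  | .allF x a, e, E =>
      bigAnd ((List.range n).map (fun i => boolize n a (Function.update e x i) E))
  | .exS X a, e, E =>
      bigOr ((List.range n).sublists.map (fun S => boolize n a e (Function.update E X S)))
  | .allS X a, e, E =>
      bigAnd ((List.range n).sublists.map (fun S => boolize n a e (Function.update E X S)))

lemma bigOr_dual (l : List PF) : (bigOr l).dual = bigAnd (l.map PF.dual) := by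
  induction l with
  | nil => rfl
  | cons f l ih => simp [bigOr, bigAnd, PF.dual] at *; exact ih

lemma bigAnd_dual (l : List PF) : (bigAnd l).dual = bigOr (l.map PF.dual) := by
  induction l with
  | nil => rfl
  | cons f l ih => simp [bigOr, bigAnd, PF.dual] at *; exact ih

lemma satBigAnd (l : List PF) (β : ℕ × ℕ → Prop) :
    (bigAnd l).Sat β ↔ ∀ f ∈ l, f.Sat β := by
  induction l with
  | nil => simp [bigAnd, PF.Sat]
  | cons f l ih => simp [bigAnd, PF.Sat] at *; tauto

lemma satBigOr (l : List PF) (β : ℕ × ℕ → Prop) :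
    (bigOr l).Sat β ↔ ∃ f ∈ l, f.Sat β := by
  induction l with
  | nil => simp [bigOr, PF.Sat]
  | cons f l ih =>
      simp only [bigOr, List.foldr, PF.Sat] at ih ⊢
      rw [ih]
      constructor
      · rintro (h | ⟨g, hg, hs⟩)
        · exact ⟨f, by simp, h⟩
        · exact ⟨g, by simp [hg], hs⟩
      · rintro ⟨g, hg, hs⟩
        rcases List.mem_cons.mp hg with rfl | hg
        · exact Or.inl hs
        · exact Or.inr ⟨g, hg, hs⟩

/-- Booleanization commutes with dualization: `B_n(dual φ)` and `dual(B_n φ)`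
are logically equivalent propositional formulas. -/
theorem stmt14 (n : ℕ) (hn : 0 < n) (φ : WForm) (e : ℕ → ℕ) (E : ℕ → List ℕ) :
    ∀ β : ℕ × ℕ → Prop,
      (boolize n φ.dual e E).Sat β ↔ (boolize n φ e E).dual.Sat β := by
  induction φ generalizing e E with
  | eq t₁ t₂ => intro β; simp [WForm.dual, boolize, PF.dual, PF.Sat]
  | ne t₁ t₂ => intro β; simp [WForm.dual, boolize, PF.dual, PF.Sat]
  | pr p t => intro β; simp [WForm.dual, boolize, PF.dual, PF.Sat]
  | npr p t => intro β; simp [WForm.dual, boolize, PF.dual, PF.Sat]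
  | sv X t => intro β; simp [WForm.dual, boolize, PF.dual, PF.Sat]
  | nsv X t => intro β; simp [WForm.dual, boolize, PF.dual, PF.Sat]
  | and a b iha ihb =>
      intro β; simp [WForm.dual, boolize, PF.dual, PF.Sat, iha, ihb]
  | or a b iha ihb =>
      intro β; simp [WForm.dual, boolize, PF.dual, PF.Sat, iha, ihb]
  | exF x a iha =>
      intro β
      simp only [WForm.dual, boolize, bigOr_dual, satBigAnd, List.map_map,
        List.mem_map, List.mem_range]
      constructor
      · rintro h f ⟨i, hi, rfl⟩; exact (iha _ _ _).mp (h _ ⟨i, hi, rfl⟩)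
      · rintro h f ⟨i, hi, rfl⟩; exact (iha _ _ _).mpr (h _ ⟨i, hi, rfl⟩)
  | allF x a iha =>
      intro β
      simp only [WForm.dual, boolize, bigAnd_dual, satBigOr, List.map_map,
        List.mem_map, List.mem_range]
      constructor
      · rintro ⟨f, ⟨i, hi, rfl⟩, hf⟩; exact ⟨_, ⟨i, hi, rfl⟩, (iha _ _ _).mp hf⟩
      · rintro ⟨f, ⟨i, hi, rfl⟩, hf⟩; exact ⟨_, ⟨i, hi, rfl⟩, (iha _ _ _).mpr hf⟩
  | exS X a iha =>
      intro β
      simp only [WForm.dual, boolize, bigOr_dual, satBigAnd, List.map_map,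
        List.mem_map]
      constructor
      · rintro h f ⟨S, hS, rfl⟩; exact (iha _ _ _).mp (h _ ⟨S, hS, rfl⟩)
      · rintro h f ⟨S, hS, rfl⟩; exact (iha _ _ _).mpr (h _ ⟨S, hS, rfl⟩)
  | allS X a iha =>
      intro β
      simp only [WForm.dual, boolize, bigAnd_dual, satBigOr, List.map_map,
        List.mem_map]
      constructor
      · rintro ⟨f, ⟨S, hS, rfl⟩, hf⟩; exact ⟨_, ⟨S, hS, rfl⟩, (iha _ _ _).mp hf⟩
      · rintro ⟨f, ⟨S, hS, rfl⟩, hf⟩; exact ⟨_, ⟨S, hS, rfl⟩, (iha _ _ _).mpr hf⟩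
end

section
/- In the 3-component alternating dining philosophers Petri net instance (forks 0,1,2 with states f/b, one right-left philosopher at position 0 with states w, h, e, and two left-right philosophers at positions 1, 2 with states w, h, e, with transitions as specified), every nonempty trap contains at least one of the places b(0), h(0), b(1), w(1), f(2), e(2). Consequently the deadlock configuration {b(0), h(0), b(1), w(1), f(2), e(2)} marks every nonempty initially marked trap. -/
/-- Places of the 3-component alternating dining philosophers net:
fork `k` has states `f k`, `b k`; philosopher `i` has states `w i`, `h i`, `e i`
(philosopher `0` is of type right-left, philosophers `1`, `2` of type left-right). -/
inductive P18
  | f (i : Fin 3)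
  | b (i : Fin 3)
  | w (i : Fin 3)
  | h (i : Fin 3)
  | e (i : Fin 3)
  deriving DecidableEq

open P18

/-- The transitions as pairs (pre-set, post-set). -/
def trans18 : List (Set P18 × Set P18) :=
  [ -- philosopher 0 (right-left):
    ({w 0, f 1}, {h 0, b 1}),                 -- gr
    ({h 0, f 0}, {e 0, b 0}),                 -- gl
    ({e 0, b 0, b 1}, {w 0, f 0, f 1}),       -- put
    -- philosopher 1 (left-right):
    ({w 1, f 1}, {h 1, b 1}),                 -- gl_1
    ({h 1, f 2}, {e 1, b 2}),                 -- gr_1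
    ({e 1, b 1, b 2}, {w 1, f 1, f 2}),       -- put_1
    -- philosopher 2 (left-right):
    ({w 2, f 2}, {h 2, b 2}),                 -- gl_2
    ({h 2, f 0}, {e 2, b 0}),                 -- gr_2
    ({e 2, b 2, b 0}, {w 2, f 2, f 0}) ]      -- put_2

/-- Trap property. -/
def IsTrap18 (W : Set P18) : Prop :=
  ∀ pp ∈ trans18, (∃ s ∈ pp.1, s ∈ W) → ∃ s ∈ pp.2, s ∈ W

/-- The deadlock configuration, as a list of places. -/
def deadlock18 : List P18 := [b 0, h 0, b 1, w 1, f 2, e 2]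

/-- The deadlock marking: one token on each place of the deadlock configuration. -/
def mDead : P18 → ℕ := fun s => if s ∈ deadlock18 then 1 else 0

/-- Every nonempty trap contains one of the places `b 0, h 0, b 1, w 1, f 2, e 2`;
consequently the deadlock configuration marks every nonempty (in particular every
nonempty initially marked) trap. -/
theorem stmt18 :
    (∀ W : Set P18, IsTrap18 W → W.Nonempty → ∃ s ∈ W, s ∈ deadlock18) ∧
    (∀ W : Set P18, IsTrap18 W → W.Nonempty → ∃ s ∈ W, 0 < mDead s) := by
  have key : ∀ W : Set P18, IsTrap18 W → W.Nonempty → ∃ s ∈ W, s ∈ deadlock18 := by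
    intro W hT hne
    by_contra hc
    push_neg at hc
    have hb0 : b 0 ∉ W := fun h' => hc _ h' (by simp [deadlock18])
    have hh0 : h 0 ∉ W := fun h' => hc _ h' (by simp [deadlock18])
    have hb1 : b 1 ∉ W := fun h' => hc _ h' (by simp [deadlock18])
    have hw1 : w 1 ∉ W := fun h' => hc _ h' (by simp [deadlock18])
    have hf2 : f 2 ∉ W := fun h' => hc _ h' (by simp [deadlock18])
    have he2 : e 2 ∉ W := fun h' => hc _ h' (by simp [deadlock18])
    have t1 := hT ({w 0, f 1}, {h 0, b 1}) (by simp [trans18])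
    have t2 := hT ({h 0, f 0}, {e 0, b 0}) (by simp [trans18])
    have t3 := hT ({e 0, b 0, b 1}, {w 0, f 0, f 1}) (by simp [trans18])
    have t5 := hT ({h 1, f 2}, {e 1, b 2}) (by simp [trans18])
    have t6 := hT ({e 1, b 1, b 2}, {w 1, f 1, f 2}) (by simp [trans18])
    have t7 := hT ({w 2, f 2}, {h 2, b 2}) (by simp [trans18])
    have t8 := hT ({h 2, f 0}, {e 2, b 0}) (by simp [trans18])
    -- from t1 : w 0 ∉ W and f 1 ∉ W
    have hw0 : w 0 ∉ W := fun h' => by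
      obtain ⟨s, hs, hsW⟩ := t1 ⟨w 0, by simp, h'⟩
      simp at hs
      rcases hs with rfl | rfl
      · exact hh0 hsW
      · exact hb1 hsW
    have hf1 : f 1 ∉ W := fun h' => by
      obtain ⟨s, hs, hsW⟩ := t1 ⟨f 1, by simp, h'⟩
      simp at hs
      rcases hs with rfl | rfl
      · exact hh0 hsW
      · exact hb1 hsW
    -- from t8 : h 2 ∉ W and f 0 ∉ W
    have hh2 : h 2 ∉ W := fun h' => by
      obtain ⟨s, hs, hsW⟩ := t8 ⟨h 2, by simp, h'⟩
      simp at hs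
      rcases hs with rfl | rfl
      · exact he2 hsW
      · exact hb0 hsW
    have hf0 : f 0 ∉ W := fun h' => by
      obtain ⟨s, hs, hsW⟩ := t8 ⟨f 0, by simp, h'⟩
      simp at hs
      rcases hs with rfl | rfl
      · exact he2 hsW
      · exact hb0 hsW
    -- from t6 : e 1 ∉ W and b 2 ∉ W
    have he1 : e 1 ∉ W := fun h' => by
      obtain ⟨s, hs, hsW⟩ := t6 ⟨e 1, by simp, h'⟩
      simp at hs
      rcases hs with rfl | rfl | rfl
      · exact hw1 hsW
      · exact hf1 hsW
      · exact hf2 hsW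
    have hb2 : b 2 ∉ W := fun h' => by
      obtain ⟨s, hs, hsW⟩ := t6 ⟨b 2, by simp, h'⟩
      simp at hs
      rcases hs with rfl | rfl | rfl
      · exact hw1 hsW
      · exact hf1 hsW
      · exact hf2 hsW
    -- from t5 : h 1 ∉ W
    have hh1 : h 1 ∉ W := fun h' => by
      obtain ⟨s, hs, hsW⟩ := t5 ⟨h 1, by simp, h'⟩
      simp at hs
      rcases hs with rfl | rfl
      · exact he1 hsW
      · exact hb2 hsW
    -- from t3 : e 0 ∉ W
    have he0 : e 0 ∉ W := fun h' => by
      obtain ⟨s, hs, hsW⟩ := t3 ⟨e 0, by simp, h'⟩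
      simp at hs
      rcases hs with rfl | rfl | rfl
      · exact hw0 hsW
      · exact hf0 hsW
      · exact hf1 hsW
    -- from t7 : w 2 ∉ W
    have hw2 : w 2 ∉ W := fun h' => by
      obtain ⟨s, hs, hsW⟩ := t7 ⟨w 2, by simp, h'⟩
      simp at hs
      rcases hs with rfl | rfl
      · exact hh2 hsW
      · exact hb2 hsW
    obtain ⟨s, hs⟩ := hne
    rcases s with i | i | i | i | i <;> fin_cases i <;> simp_all
  refine ⟨key, fun W hW hne => ?_⟩
  obtain ⟨s, hsW, hsD⟩ := key W hW hne
  exact ⟨s, hsW, by simp [mDead, hsD]⟩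
end
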